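/- Let A be an invertible N×N matrix over a field, whose columns are partitioned into consecutive blocks A = (A_1 | A_2 | ⋯ | A_k) with A_i of size N × n_i and n_1 + ⋯ + n_k = N. Then there exists a permutation of the rows of A after which, writing the row indices as consecutive blocks of sizes n_1,…,n_k, the diagonal square blocks C_i (the n_i × n_i submatrix of A_i on the i-th row block) are all invertible. -/

import Mathlib

open Matrix Finset


/-- Let `A` be an invertible `N × N` matrix over a field whose columns are partitioned
into blocks of sizes `n 0, …, n (k-1)` (with `n 0 + ⋯ + n (k-1) = N`; rows and columns
are indexed by the sigma type `Σ i, Fin (n i)`).  Then the rows of `A` can be permuted so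
that for each `i` the diagonal square block, i.e. the `n i × n i` submatrix of the `i`-th
column block lying on the `i`-th row block, is invertible. -/
theorem exists_row_permutation_diagonal_blocks_invertible {F : Type*} [Field F]
    {k : ℕ} (n : Fin k → ℕ)
    (A : Matrix ((i : Fin k) × Fin (n i)) ((i : Fin k) × Fin (n i)) F)
    (hA : IsUnit A.det) :
    ∃ σ : Equiv.Perm ((i : Fin k) × Fin (n i)), ∀ i : Fin k,
      IsUnit (Matrix.det (Matrix.of fun a b : Fin (n i) => A (σ ⟨i, a⟩) ⟨i, b⟩)) := by
  classical
  have hdet : A.det ≠ 0 := hA.ne_zero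
  let M : (((i : Fin k) × Fin (n i)) → Fin k) →
      Matrix ((i : Fin k) × Fin (n i)) ((i : Fin k) × Fin (n i)) F := fun f =>
    Matrix.of fun x y => if y.1 = f x then A x y else 0
  -- Step 1: multilinear expansion of the determinant over row decompositions
  have hsum : A.det = ∑ f : ((i : Fin k) × Fin (n i)) → Fin k, (M f).det := by
    have h1 : A =
        fun x => ∑ i : Fin k,
          (fun y : (i : Fin k) × Fin (n i) => if y.1 = i then A x y else 0) := by
      funext x y
      simp [Finset.sum_apply, Finset.sum_ite_eq]
    calc A.det
        = Matrix.detRowAlternating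
            (fun x => ∑ i : Fin k,
              (fun y : (i : Fin k) × Fin (n i) => if y.1 = i then A x y else 0)) := by
          rw [← h1]; rfl
      _ = ∑ f : ((i : Fin k) × Fin (n i)) → Fin k, (M f).det :=
          (Matrix.detRowAlternating (R := F) (n := (i : Fin k) × Fin (n i))).toMultilinearMap.map_sum
            (fun x i => (fun y : (i : Fin k) × Fin (n i) => if y.1 = i then A x y else 0))
  obtain ⟨f, -, hf⟩ : ∃ f ∈ (univ : Finset (((i : Fin k) × Fin (n i)) → Fin k)),
      (M f).det ≠ 0 :=
    Finset.exists_ne_zero_of_sum_ne_zero (hsum ▸ hdet)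
  have hrows : LinearIndependent F (fun x => M f x) :=
    Matrix.linearIndependent_rows_iff_isUnit.2
      ((Matrix.isUnit_iff_isUnit_det _).2 (isUnit_iff_ne_zero.2 hf))
  -- Step 2: each fiber of f has cardinality at most n i
  have hcard : ∀ i : Fin k, Fintype.card {x : (i : Fin k) × Fin (n i) // f x = i} ≤ n i := by
    intro i
    have hv : LinearIndependent F
        (fun x : {x : (i : Fin k) × Fin (n i) // f x = i} =>
          fun b : Fin (n i) => M f x.1 ⟨i, b⟩) := by
      rw [Fintype.linearIndependent_iff]
      intro c hc x₀
      set c' : ((i : Fin k) × Fin (n i)) → F :=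
        fun x => if h : f x = i then c ⟨x, h⟩ else 0 with hc'
      have key : ∀ y : (i : Fin k) × Fin (n i),
          ∑ x : (i : Fin k) × Fin (n i), c' x * M f x y
          = ∑ x : {x : (i : Fin k) × Fin (n i) // f x = i}, c x * M f x.1 y := by
        intro y
        rw [← (Equiv.sigmaFiberEquiv f).sum_comp (fun x => c' x * M f x y),
          ← Finset.univ_sigma_univ, Finset.sum_sigma]
        rw [Finset.sum_eq_single i]
        · apply Finset.sum_congr rfl
          intro x _
          simp only [Equiv.sigmaFiberEquiv, Equiv.coe_fn_mk, hc']
          rw [dif_pos x.2]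
        · intro j _ hji
          apply Finset.sum_eq_zero
          intro x _
          simp only [Equiv.sigmaFiberEquiv, Equiv.coe_fn_mk, hc']
          rw [dif_neg (by rw [x.2]; exact hji)]
          ring
        · intro h
          exact absurd (Finset.mem_univ i) h
      have h0 : ∑ x : (i : Fin k) × Fin (n i), c' x • M f x = 0 := by
        funext y
        obtain ⟨j, b⟩ := y
        simp only [Finset.sum_apply, Pi.smul_apply, smul_eq_mul, Pi.zero_apply]
        rw [key ⟨j, b⟩]
        by_cases hji : j = i
        · subst hji
          have := congrFun hc b
          simpa [Finset.sum_apply] using this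
        · apply Finset.sum_eq_zero
          intro x _
          have hz : M f x.1 ⟨j, b⟩ = 0 := by
            show (if j = f x.1 then A x.1 ⟨j, b⟩ else 0) = 0
            rw [if_neg (by rw [x.2]; exact hji)]
          rw [hz, mul_zero]
      have := Fintype.linearIndependent_iff.1 hrows c' h0 x₀.1
      simpa [hc', dif_pos x₀.2] using this
    have h1 := hv.fintype_card_le_finrank
    simpa [Module.finrank_fintype_fun_eq_card] using h1
  -- Step 3: fibers have cardinality exactly n i
  have htot : ∑ i : Fin k, Fintype.card {x : (i : Fin k) × Fin (n i) // f x = i}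
      = ∑ i : Fin k, n i := by
    rw [← Fintype.card_sigma]
    rw [Fintype.card_congr (Equiv.sigmaFiberEquiv f)]
    simp [Fintype.card_sigma]
  have hcards : ∀ i : Fin k, Fintype.card {x : (i : Fin k) × Fin (n i) // f x = i} = n i := by
    have := (Finset.sum_eq_sum_iff_of_le (fun j _ => hcard j)).1 htot
    exact fun i => this i (Finset.mem_univ i)
  -- Step 4: build the permutation
  let e : ∀ i : Fin k, Fin (n i) ≃ {x : (i : Fin k) × Fin (n i) // f x = i} :=
    fun i => (Fintype.equivFinOfCardEq (hcards i)).symm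
  let σ : Equiv.Perm ((i : Fin k) × Fin (n i)) :=
    (Equiv.sigmaCongrRight e).trans (Equiv.sigmaFiberEquiv f)
  have hσ : ∀ (i : Fin k) (a : Fin (n i)), f (σ ⟨i, a⟩) = i := by
    intro i a
    exact (e i a).2
  refine ⟨σ, ?_⟩
  -- the permuted matrix is block triangular
  set M' : Matrix ((i : Fin k) × Fin (n i)) ((i : Fin k) × Fin (n i)) F :=
    (M f).submatrix σ id with hM'
  have hbt : M'.BlockTriangular Sigma.fst := by
    intro x y hxy
    show (if y.1 = f (σ x) then A (σ x) y else 0) = 0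
    obtain ⟨i, a⟩ := x
    rw [if_neg]
    rw [hσ i a]
    exact ne_of_lt hxy
  have hdet' : M'.det = ∏ i : Fin k, (M'.toSquareBlock Sigma.fst i).det :=
    hbt.det_fintype
  have hM'det : M'.det ≠ 0 := by
    rw [hM', Matrix.det_permute]
    simp only [ne_eq, mul_eq_zero, not_or]
    constructor
    · rcases Int.units_eq_one_or (Equiv.Perm.sign σ) with h | h <;> simp [h]
    · exact hf
  have hprod : ∀ i ∈ (univ : Finset (Fin k)), (M'.toSquareBlock Sigma.fst i).det ≠ 0 := by
    rw [← Finset.prod_ne_zero_iff, ← hdet']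
    exact hM'det
  intro i
  rw [isUnit_iff_ne_zero]
  have hblock : (M'.toSquareBlock Sigma.fst i).det
      = Matrix.det (Matrix.of fun a b : Fin (n i) => A (σ ⟨i, a⟩) ⟨i, b⟩) := by
    let ε : Fin (n i) ≃ {x : (i : Fin k) × Fin (n i) // x.1 = i} :=
      { toFun := fun a => ⟨⟨i, a⟩, rfl⟩
        invFun := fun x => Fin.cast (congrArg n x.2) x.1.2
        left_inv := fun a => rfl
        right_inv := by rintro ⟨⟨j, b⟩, rfl⟩; rfl }
    rw [← Matrix.det_submatrix_equiv_self ε]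
    congr 1
    ext a b
    show M' ⟨i, a⟩ ⟨i, b⟩ = A (σ ⟨i, a⟩) ⟨i, b⟩
    show (if ((⟨i, b⟩ : (i : Fin k) × Fin (n i))).1 = f (σ ⟨i, a⟩)
        then A (σ ⟨i, a⟩) ⟨i, b⟩ else 0) = A (σ ⟨i, a⟩) ⟨i, b⟩
    rw [if_pos (by rw [hσ i a])]
  rw [← hblock]
  exact hprod i (Finset.mem_univ i)
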